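/- Let K be a locally compact Hausdorff space and X a Banach space. If f ∈ C₀(K, X) is a smooth point, then M_f is a singleton {k₀} and f(k₀) is a smooth point of X. -/

import Mathlib

open ZeroAtInfty Set Filter Topology

section Aux
variable {𝕜 K X : Type*} [RCLike 𝕜] [TopologicalSpace K]
  [NormedAddCommGroup X] [NormedSpace 𝕜 X]

theorem myNormApplyLe (f : C₀(K, X)) (k : K) : ‖f k‖ ≤ ‖f‖ := by
  rw [← ZeroAtInftyContinuousMap.norm_toBCF_eq_norm]
  exact f.toBCF.norm_coe_le_norm k

/-- evaluation as a CLM -/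
noncomputable def evalClm (𝕜 : Type*) [RCLike 𝕜] {K X : Type*} [TopologicalSpace K]
    [NormedAddCommGroup X] [NormedSpace 𝕜 X] (k : K) : C₀(K, X) →L[𝕜] X :=
  LinearMap.mkContinuous
    { toFun := fun f => f k
      map_add' := fun f g => rfl
      map_smul' := fun c f => rfl } 1 (fun f => by simpa using myNormApplyLe f k)

@[simp] theorem evalClm_apply (k : K) (f : C₀(K, X)) : evalClm 𝕜 k f = f k := rfl

theorem hcs_coe (g : C(K, ℝ)) (hg : HasCompactSupport g) :
    HasCompactSupport (fun k => ((g k : ℝ) : 𝕜)) :=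
  hg.comp_left (g := fun r : ℝ => (r : 𝕜)) (by simp)

/-- scale a C₀ function by a compactly supported scalar function -/
noncomputable def smulC0 (𝕜 : Type*) [RCLike 𝕜] {K X : Type*} [TopologicalSpace K]
    [NormedAddCommGroup X] [NormedSpace 𝕜 X]
    (g : C(K, ℝ)) (hg : HasCompactSupport g) (f : C₀(K, X)) : C₀(K, X) :=
  { toFun := fun k => ((g k : ℝ) : 𝕜) • f k
    continuous_toFun := (RCLike.continuous_ofReal.comp g.continuous).smul (map_continuous f)
    zero_at_infty' := ((hcs_coe g hg).smul_right (f' := fun k => f k)).is_zero_at_infty }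

@[simp] theorem smulC0_apply (g : C(K, ℝ)) (hg : HasCompactSupport g) (f : C₀(K, X)) (k : K) :
    smulC0 𝕜 g hg f k = ((g k : ℝ) : 𝕜) • f k := rfl

/-- bump times a constant vector -/
noncomputable def bumpC0 (𝕜 : Type*) [RCLike 𝕜] {K X : Type*} [TopologicalSpace K]
    [NormedAddCommGroup X] [NormedSpace 𝕜 X]
    (g : C(K, ℝ)) (hg : HasCompactSupport g) (x : X) : C₀(K, X) :=
  { toFun := fun k => ((g k : ℝ) : 𝕜) • x
    continuous_toFun := (RCLike.continuous_ofReal.comp g.continuous).smul continuous_const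
    zero_at_infty' := ((hcs_coe g hg).smul_right (f' := fun _ => x)).is_zero_at_infty }

@[simp] theorem bumpC0_apply (g : C(K, ℝ)) (hg : HasCompactSupport g) (x : X) (k : K) :
    bumpC0 𝕜 g hg x k = ((g k : ℝ) : 𝕜) • x := rfl

theorem myExistsNormEq [T2Space K] (f : C₀(K, X)) (hf : f ≠ 0) : ∃ k, ‖f k‖ = ‖f‖ := by
  have hfpos : 0 < ‖f‖ := norm_pos_iff.mpr hf
  have hzero : Tendsto (fun k => ‖f k‖) (cocompact K) (𝓝 0) := by simpa using (zero_at_infty f).norm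
  have hev : ∀ᶠ k in cocompact K, ‖f k‖ < ‖f‖ / 2 :=
    hzero.eventually_lt_const (by linarith)
  rw [eventually_iff, mem_cocompact] at hev
  obtain ⟨C, hC, hCsub⟩ := hev
  set S : Set K := {k | ‖f‖ / 2 ≤ ‖f k‖} with hS
  have hSclosed : IsClosed S := isClosed_le continuous_const ((map_continuous f).norm)
  have hSsub : S ⊆ C := by
    intro k hk
    by_contra hkC
    have h2 := hCsub hkC
    simp only [hS, mem_setOf_eq] at h2 hk
    linarith
  have hScompact : IsCompact S := hC.of_isClosed_subset hSclosed hSsub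
  have hSne : S.Nonempty := by
    by_contra hSe
    rw [not_nonempty_iff_eq_empty, eq_empty_iff_forall_notMem] at hSe
    have hle : ‖f‖ ≤ ‖f‖ / 2 := by
      rw [← ZeroAtInftyContinuousMap.norm_toBCF_eq_norm]
      refine (BoundedContinuousFunction.norm_le (by positivity)).mpr fun k => ?_
      have := hSe k
      simp only [hS, mem_setOf_eq, not_le] at this
      exact le_of_lt this
    linarith
  obtain ⟨k₀, hk₀S, hk₀max⟩ := hScompact.exists_isMaxOn hSne ((map_continuous f).norm.continuousOn)
  refine ⟨k₀, le_antisymm (myNormApplyLe f k₀) ?_⟩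
  rw [← ZeroAtInftyContinuousMap.norm_toBCF_eq_norm]
  refine (BoundedContinuousFunction.norm_le (norm_nonneg _)).mpr fun k => ?_
  by_cases hk : k ∈ S
  · exact hk₀max hk
  · exact (le_of_lt (not_le.mp hk)).trans hk₀S
end Aux

/-- If `f ∈ C₀(K, X)` is a smooth point, then its norm-attaining set is a singleton `{k₀}`
and `f k₀` is a smooth point of `X`. -/
theorem smooth_point_C0KX_necessary {𝕜 K X : Type*} [RCLike 𝕜] [TopologicalSpace K]
    [LocallyCompactSpace K] [T2Space K]
    [NormedAddCommGroup X] [NormedSpace 𝕜 X] [CompleteSpace X]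
    (f : C₀(K, X)) (hf : f ≠ 0)
    (hsmooth : ∃! φ : C₀(K, X) →L[𝕜] 𝕜, ‖φ‖ = 1 ∧ φ f = (‖f‖ : 𝕜)) :
    ∃ k₀ : K, {k : K | ‖f k‖ = ‖f‖} = {k₀} ∧
      (∃! ψ : X →L[𝕜] 𝕜, ‖ψ‖ = 1 ∧ ψ (f k₀) = (‖f k₀‖ : 𝕜)) := by
  obtain ⟨k₀, hk₀⟩ := myExistsNormEq f hf
  have hfpos : 0 < ‖f‖ := norm_pos_iff.mpr hf
  have hfk : ∀ k : K, ‖f k‖ = ‖f‖ → f k ≠ 0 := by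
    intro k hk h0
    rw [h0, norm_zero] at hk
    linarith
  obtain ⟨ψ₀, hψ₀n, hψ₀v⟩ := exists_dual_vector 𝕜 (f k₀) (norm_ne_zero_iff.mpr (hfk k₀ hk₀))
  obtain ⟨φ, -, hφuniq⟩ := hsmooth
  -- any evaluation-composed norming functional equals the unique φ
  have key : ∀ (k : K), ‖f k‖ = ‖f‖ → ∀ ψ : X →L[𝕜] 𝕜, ‖ψ‖ = 1 →
      ψ (f k) = (‖f k‖ : 𝕜) → ψ.comp (evalClm 𝕜 k) = φ := by
    intro k hk ψ hψn hψv
    apply hφuniq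
    have h1 : ‖(ψ.comp (evalClm 𝕜 k)) f‖ = ‖f‖ := by
      rw [ContinuousLinearMap.comp_apply, evalClm_apply, hψv, hk, RCLike.norm_ofReal,
        abs_of_nonneg (norm_nonneg f)]
    constructor
    · apply le_antisymm
      · refine ContinuousLinearMap.opNorm_le_bound _ zero_le_one fun h => ?_
        calc ‖(ψ.comp (evalClm 𝕜 k)) h‖ = ‖ψ (h k)‖ := rfl
          _ ≤ ‖ψ‖ * ‖h k‖ := ψ.le_opNorm _
          _ = ‖h k‖ := by rw [hψn, one_mul]
          _ ≤ 1 * ‖h‖ := by rw [one_mul]; exact myNormApplyLe h k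
      · have h2 := (ψ.comp (evalClm 𝕜 k)).le_opNorm f
        rw [h1] at h2
        have : 1 * ‖f‖ ≤ ‖ψ.comp (evalClm 𝕜 k)‖ * ‖f‖ := by linarith
        exact le_of_mul_le_mul_right this hfpos
    · rw [ContinuousLinearMap.comp_apply, evalClm_apply, hψv, hk]
  refine ⟨k₀, ?_, ?_⟩
  · -- the norm-attaining set is {k₀}
    ext k
    simp only [Set.mem_setOf_eq, Set.mem_singleton_iff]
    constructor
    · intro hk
      by_contra hne
      obtain ⟨ψ₁, hψ₁n, hψ₁v⟩ := exists_dual_vector 𝕜 (f k) (norm_ne_zero_iff.mpr (hfk k hk))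
      obtain ⟨g, hg1, hg0, hgc, -⟩ :=
        exists_continuous_one_zero_of_isCompact (isCompact_singleton (x := k₀))
          (isClosed_singleton (x := k)) (Set.disjoint_singleton.mpr (Ne.symm hne))
      have e : ψ₁.comp (evalClm 𝕜 k) = ψ₀.comp (evalClm 𝕜 k₀) :=
        (key k hk ψ₁ hψ₁n hψ₁v).trans (key k₀ hk₀ ψ₀ hψ₀n hψ₀v).symm
      have e2 := congrArg (fun Φ : C₀(K, X) →L[𝕜] 𝕜 => Φ (smulC0 𝕜 g hgc f)) e
      simp only [ContinuousLinearMap.comp_apply, evalClm_apply, smulC0_apply] at e2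
      rw [hg0 rfl, hg1 rfl] at e2
      simp only [Pi.zero_apply, Pi.one_apply, RCLike.ofReal_zero, RCLike.ofReal_one,
        zero_smul, one_smul, map_zero] at e2
      rw [hψ₀v, hk₀] at e2
      exact (RCLike.ofReal_ne_zero.mpr hfpos.ne') e2.symm
    · rintro rfl
      exact hk₀
  · -- f k₀ is a smooth point of X
    refine ⟨ψ₀, ⟨hψ₀n, hψ₀v⟩, ?_⟩
    rintro ψ' ⟨hψ'n, hψ'v⟩
    have e : ψ'.comp (evalClm 𝕜 k₀) = ψ₀.comp (evalClm 𝕜 k₀) :=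
      (key k₀ hk₀ ψ' hψ'n hψ'v).trans (key k₀ hk₀ ψ₀ hψ₀n hψ₀v).symm
    ext x
    obtain ⟨g, hg1, -, hgc, -⟩ :=
      exists_continuous_one_zero_of_isCompact (isCompact_singleton (x := k₀))
        isClosed_empty (Set.disjoint_empty _)
    have e2 := congrArg (fun Φ : C₀(K, X) →L[𝕜] 𝕜 => Φ (bumpC0 𝕜 g hgc x)) e
    simp only [ContinuousLinearMap.comp_apply, evalClm_apply, bumpC0_apply] at e2
    rw [hg1 rfl] at e2
    simpa using e2
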